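/- For any path-connected space X, cat(X) ≤ TC(X) ≤ cat(X × X), where cat is the non-normalized LS-category and TC is the topological complexity. -/

import Mathlib

open Set unitInterval

universe u v

/-- A motion planner on a subset `U ⊆ X × X`: a continuous choice of paths
joining the two coordinates of each point of `U`. -/
def IsMotionPlanner {X : Type u} [TopologicalSpace X] (U : Set (X × X))
    (s : C(U, C(unitInterval, X))) : Prop :=
  ∀ z : U, ((s z) 0, (s z) 1) = (z : X × X)

/-- `X × X` admits an open cover by `n` sets, each admitting a continuous section of
the path fibration `p : X^I → X × X`, `p(α) = (α 0, α 1)`. -/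
def TCCover (X : Type u) [TopologicalSpace X] (n : ℕ) : Prop :=
  ∃ U : Fin n → Set (X × X),
    (∀ i, IsOpen (U i)) ∧ (∀ z : X × X, ∃ i, z ∈ U i) ∧
      ∀ i, ∃ s : C(U i, C(unitInterval, X)), IsMotionPlanner (U i) s

/-- (Non-normalized) topological complexity of Farber. -/
noncomputable def topologicalComplexity (X : Type u) [TopologicalSpace X] : ℕ :=
  sInf {n | TCCover X n}

/-- Monoidal version: each set contains the diagonal and the sections are constant paths
on the diagonal. -/
def TCMCover (X : Type u) [TopologicalSpace X] (n : ℕ) : Prop :=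
  ∃ U : Fin n → Set (X × X),
    (∀ i, IsOpen (U i)) ∧ (∀ i (x : X), (x, x) ∈ U i) ∧ (∀ z : X × X, ∃ i, z ∈ U i) ∧
      ∀ i, ∃ s : C(U i, C(unitInterval, X)), IsMotionPlanner (U i) s ∧
        ∀ (x : X) (h : (x, x) ∈ U i), s ⟨(x, x), h⟩ = ContinuousMap.const unitInterval x

/-- Monoidal topological complexity of Iwase–Sakai (non-normalized). -/
noncomputable def monoidalTC (X : Type u) [TopologicalSpace X] : ℕ :=
  sInf {n | TCMCover X n}

/-- `X` admits an open cover by `n` sets, each contractible in `X`. -/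
def catCover (X : Type u) [TopologicalSpace X] (n : ℕ) : Prop :=
  ∃ U : Fin n → Set X,
    (∀ i, IsOpen (U i)) ∧ (∀ x : X, ∃ i, x ∈ U i) ∧
      ∀ i, ∃ x₀ : X, ContinuousMap.Homotopic
        (⟨Subtype.val, continuous_subtype_val⟩ : C(U i, X)) (ContinuousMap.const (U i) x₀)

/-- Non-normalized Lusternik–Schnirelmann category (`LScat pt = 1`). -/
noncomputable def LScat (X : Type u) [TopologicalSpace X] : ℕ :=
  sInf {n | catCover X n}

/-- `X` is `q`-connected: path-connected with trivial homotopy groups `π_k` for `1 ≤ k ≤ q`. -/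
def IsQConnected (X : Type u) [TopologicalSpace X] (q : ℕ) : Prop :=
  PathConnectedSpace X ∧
    ∀ k : ℕ, 1 ≤ k → k ≤ q → ∀ x : X, Subsingleton (HomotopyGroup (Fin k) X x)

/-- `X` carries a CW-structure all of whose cells have dimension at most `m`:
there are characteristic maps from closed euclidean balls whose open-cell images cover `X`
injectively, cell boundaries attach to cells of lower dimension, no cells above dimension `m`,
and `X` has the weak topology determined by the cells. -/
def IsCWComplexOfDimLE (X : Type u) [TopologicalSpace X] (m : ℕ) : Prop :=
  ∃ (cells : ℕ → Type) (Φ : ∀ n, cells n →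
      C((Metric.closedBall (0 : EuclideanSpace ℝ (Fin n)) 1 :
          Set (EuclideanSpace ℝ (Fin n))), X)),
    (∀ n, m < n → IsEmpty (cells n)) ∧
    (∀ x : X, ∃ n, ∃ i : cells n,
        ∃ b : (Metric.closedBall (0 : EuclideanSpace ℝ (Fin n)) 1 :
            Set (EuclideanSpace ℝ (Fin n))),
          ‖(b : EuclideanSpace ℝ (Fin n))‖ < 1 ∧ Φ n i b = x) ∧
    (∀ n (i : cells n), Set.InjOn (Φ n i) {b | ‖(b : EuclideanSpace ℝ (Fin n))‖ < 1}) ∧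
    (∀ n (i : cells n)
        (b : (Metric.closedBall (0 : EuclideanSpace ℝ (Fin n)) 1 :
            Set (EuclideanSpace ℝ (Fin n)))),
        ‖(b : EuclideanSpace ℝ (Fin n))‖ = 1 →
        ∃ k, k < n ∧ ∃ j : cells k,
          ∃ b' : (Metric.closedBall (0 : EuclideanSpace ℝ (Fin k)) 1 :
              Set (EuclideanSpace ℝ (Fin k))),
            Φ k j b' = Φ n i b) ∧
    (∀ A : Set X, (∀ n (i : cells n), IsClosed ((Φ n i) ⁻¹' A)) → IsClosed A)

lemma catCover_of_TCCover {X : Type*} [TopologicalSpace X] [Nonempty X] {n : ℕ}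
    (h : TCCover X n) : catCover X n := by
  obtain ⟨U, hop, hcov, hs⟩ := h
  obtain ⟨x₀⟩ := ‹Nonempty X›
  refine ⟨fun i => {x | (x, x₀) ∈ U i}, fun i =>
    (hop i).preimage (continuous_id.prodMk continuous_const),
    fun x => hcov (x, x₀), fun i => ?_⟩
  obtain ⟨s, hsp⟩ := hs i
  refine ⟨x₀, ⟨?_⟩⟩
  have hg : Continuous fun x : {x | (x, x₀) ∈ U i} =>
      s ⟨(x.1, x₀), x.2⟩ :=
    s.continuous.comp (Continuous.subtype_mk
      (continuous_subtype_val.prodMk continuous_const) _)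
  refine
    { toFun := fun p => s ⟨(p.2.1, x₀), p.2.2⟩ p.1
      continuous_toFun := ?_
      map_zero_left := fun x => congrArg Prod.fst (hsp ⟨(x.1, x₀), x.2⟩)
      map_one_left := fun x => congrArg Prod.snd (hsp ⟨(x.1, x₀), x.2⟩) }
  exact continuous_eval.comp ((hg.comp continuous_snd).prodMk continuous_fst)

lemma catCover_sq {X : Type*} [TopologicalSpace X] {n : ℕ}
    (h : catCover X n) : catCover (X × X) (n * n) := by
  obtain ⟨U, hop, hcov, hcon⟩ := h
  refine ⟨fun k => U (finProdFinEquiv.symm k).1 ×ˢ U (finProdFinEquiv.symm k).2,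
    fun k => ((hop _).prod (hop _)), fun z => ?_, fun k => ?_⟩
  · obtain ⟨i, hi⟩ := hcov z.1
    obtain ⟨j, hj⟩ := hcov z.2
    exact ⟨finProdFinEquiv (i, j), by simp [hi, hj]⟩
  · set i := (finProdFinEquiv.symm k).1
    set j := (finProdFinEquiv.symm k).2
    obtain ⟨a, ⟨H₁⟩⟩ := hcon i
    obtain ⟨b, ⟨H₂⟩⟩ := hcon j
    refine ⟨(a, b), ⟨?_⟩⟩
    refine
      { toFun := fun p => (H₁ (p.1, ⟨p.2.1.1, p.2.2.1⟩), H₂ (p.1, ⟨p.2.1.2, p.2.2.2⟩))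
        continuous_toFun := ?_
        map_zero_left := fun z => ?_
        map_one_left := fun z => ?_ }
    · refine Continuous.prodMk ?_ ?_
      · exact H₁.continuous.comp (continuous_fst.prodMk (Continuous.subtype_mk
          (continuous_fst.comp (continuous_subtype_val.comp continuous_snd)) _))
      · exact H₂.continuous.comp (continuous_fst.prodMk (Continuous.subtype_mk
          (continuous_snd.comp (continuous_subtype_val.comp continuous_snd)) _))
    · simp [H₁.apply_zero, H₂.apply_zero]
    · simp [H₁.apply_one, H₂.apply_one]

lemma TCCover_of_catCover_sq {X : Type*} [TopologicalSpace X] [PathConnectedSpace X] {n : ℕ}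
    (h : catCover (X × X) n) : TCCover X n := by
  obtain ⟨U, hop, hcov, hcon⟩ := h
  refine ⟨U, hop, hcov, fun i => ?_⟩
  obtain ⟨c₀, ⟨H⟩⟩ := hcon i
  obtain ⟨p₂⟩ := PathConnectedSpace.joined c₀.1 c₀.2
  -- path families
  let γ₁ : ∀ z : U i, Path (z : X × X).1 c₀.1 := fun z =>
    { toFun := fun t => (H (t, z)).1
      continuous_toFun := continuous_fst.comp
        (H.continuous.comp (continuous_id.prodMk continuous_const))
      source' := by simp [H.apply_zero]
      target' := by simp [H.apply_one] }
  let γ₃ : ∀ z : U i, Path c₀.2 (z : X × X).2 := fun z =>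
    { toFun := fun t => (H (σ t, z)).2
      continuous_toFun := continuous_snd.comp
        (H.continuous.comp ((unitInterval.continuous_symm).prodMk continuous_const))
      source' := by simp [H.apply_one]
      target' := by simp [H.apply_zero] }
  have hγ₁ : Continuous ↿γ₁ := by
    have : Continuous fun p : (U i) × I => (H (p.2, p.1)).1 :=
      continuous_fst.comp (H.continuous.comp (continuous_snd.prodMk continuous_fst))
    exact this
  have hγ₃ : Continuous ↿γ₃ := by
    have : Continuous fun p : (U i) × I => (H (σ p.2, p.1)).2 :=
      continuous_snd.comp (H.continuous.comp
        ((unitInterval.continuous_symm.comp continuous_snd).prodMk continuous_fst))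
    exact this
  have hγ₂ : Continuous ↿(fun _ : U i => p₂) := p₂.continuous.comp continuous_snd
  let γ : ∀ z : U i, Path (z : X × X).1 (z : X × X).2 := fun z =>
    (γ₁ z).trans (p₂.trans (γ₃ z))
  have hγ : Continuous ↿γ :=
    Path.trans_continuous_family γ₁ hγ₁ _
      (Path.trans_continuous_family (fun _ => p₂) hγ₂ γ₃ hγ₃)
  refine ⟨ContinuousMap.curry ⟨↿γ, hγ⟩, fun z => ?_⟩
  show ((γ z) 0, (γ z) 1) = (z : X × X)
  simp

/-- `cat(X) ≤ TC(X) ≤ cat(X × X)` for a path-connected paracompact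
space `X` (non-normalized conventions). -/
theorem cat_le_TC_le_cat_square (X : Type u) [TopologicalSpace X]
    [PathConnectedSpace X] [ParacompactSpace X] :
    LScat X ≤ topologicalComplexity X ∧ topologicalComplexity X ≤ LScat (X × X) := by
  haveI : Nonempty X := PathConnectedSpace.nonempty
  constructor
  · by_cases hne : {n | TCCover X n}.Nonempty
    · exact Nat.sInf_le (catCover_of_TCCover (Nat.sInf_mem hne))
    · have h2 : {n | catCover X n} = ∅ := by
        ext n
        simp only [mem_setOf_eq, mem_empty_iff_false, iff_false]
        intro hc
        exact hne ⟨n * n, TCCover_of_catCover_sq (catCover_sq hc)⟩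
      simp [LScat, topologicalComplexity, h2, Set.not_nonempty_iff_eq_empty.mp hne]
  · by_cases hne : {n | catCover (X × X) n}.Nonempty
    · exact Nat.sInf_le (TCCover_of_catCover_sq (Nat.sInf_mem hne))
    · have h2 : {n | TCCover X n} = ∅ := by
        ext n
        simp only [mem_setOf_eq, mem_empty_iff_false, iff_false]
        intro hc
        exact hne ⟨n * n, catCover_sq (catCover_of_TCCover hc)⟩
      simp [LScat, topologicalComplexity, h2, Set.not_nonempty_iff_eq_empty.mp hne]
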